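/- arXiv:2006.02124 — 6 statements merged into one kernel-verified Lean document; each statement's English description precedes it below -/
import Mathlib

section
/- Let G be a graph, H a graph with root vertex v ∈ V(H), and let f be a γ_I(G∘_v H)-function. Then for every x ∈ V(G), the weight of the restriction f_x of f to the copy H_x satisfies ω(f_x) ≥ γ_I(H) − 1; moreover, if ω(f_x) = γ_I(H) − 1, then f(x) = 0. -/
open Finset

open scoped Classical

/-- An Italian dominating function on a finite simple graph: values in {0,1,2} and
every vertex with value 0 has neighbour values summing to at least 2. -/
noncomputable def IsIDF {α : Type*} [Fintype α] (G : SimpleGraph α) (f : α → ℕ) : Prop :=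
  (∀ u, f u ≤ 2) ∧
    ∀ u, f u = 0 → 2 ≤ ∑ w ∈ Finset.univ.filter (fun w => G.Adj u w), f w

/-- The Italian domination number γ_I(G). -/
noncomputable def italianNumber {α : Type*} [Fintype α] (G : SimpleGraph α) : ℕ :=
  sInf {n | ∃ f : α → ℕ, IsIDF G f ∧ ∑ u, f u = n}

/-- A γ_I(G)-function: an IDF on G of minimum weight. -/
noncomputable def IsMinIDF {α : Type*} [Fintype α] (G : SimpleGraph α) (f : α → ℕ) : Prop :=
  IsIDF G f ∧ ∑ u, f u = italianNumber G

/-- D is a dominating set of G. -/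
def IsDomSet {α : Type*} (G : SimpleGraph α) (D : Set α) : Prop :=
  ∀ u ∉ D, ∃ w ∈ D, G.Adj u w

/-- The domination number γ(G). -/
noncomputable def dominationNumber {α : Type*} [Fintype α] (G : SimpleGraph α) : ℕ :=
  sInf {n | ∃ D : Finset α, IsDomSet G ↑D ∧ D.card = n}

/-- The degree of a vertex. -/
noncomputable def deg {α : Type*} [Fintype α] (G : SimpleGraph α) (u : α) : ℕ :=
  (Finset.univ.filter (fun w => G.Adj u w)).card

/-- The rooted product G∘_v H: one copy of H for each vertex of G, the root v of the
x-th copy being identified with the vertex x of G. The pair (x, y) is the vertex y of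
the x-th copy of H; in particular (x, v) is the vertex x of G. -/
def rootedProd {α β : Type*} (G : SimpleGraph α) (H : SimpleGraph β) (v : β) :
    SimpleGraph (α × β) where
  Adj p q := (p.1 = q.1 ∧ H.Adj p.2 q.2) ∨ (p.2 = v ∧ q.2 = v ∧ G.Adj p.1 q.1)
  symm := by
    constructor
    rintro ⟨x, y⟩ ⟨x', y'⟩ (⟨h1, h2⟩ | ⟨h1, h2, h3⟩)
    · exact Or.inl ⟨h1.symm, h2.symm⟩
    · exact Or.inr ⟨h2, h1, h3.symm⟩
  loopless := by
    constructor
    rintro ⟨x, y⟩ (⟨_, h⟩ | ⟨_, _, h⟩)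
    · exact H.loopless.irrefl _ h
    · exact G.loopless.irrefl _ h

/-- The weight ω(f_x) of the restriction of f to the copy H_x. -/
def copyWeight {α β : Type*} [Fintype β] (f : α × β → ℕ) (x : α) : ℕ :=
  ∑ y, f (x, y)

/-- The graph H − {v} obtained from H by deleting the vertex v. -/
def deleteVertex {β : Type*} (H : SimpleGraph β) (v : β) : SimpleGraph {w : β // w ≠ v} :=
  SimpleGraph.induce {w : β | w ≠ v} H

/-- Lemma 1: for a γ_I(G∘_v H)-function f and every x ∈ V(G),
ω(f_x) ≥ γ_I(H) − 1, and if ω(f_x) = γ_I(H) − 1 then f(x) = 0. -/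
theorem stmt0 {α β : Type*} [Fintype α] [Nonempty α] [Fintype β]
    (G : SimpleGraph α) (H : SimpleGraph β) (v : β)
    (f : α × β → ℕ) (hf : IsMinIDF (rootedProd G H v) f) (x : α) :
    italianNumber H - 1 ≤ copyWeight f x ∧
      (copyWeight f x = italianNumber H - 1 → f (x, v) = 0) := by
  obtain ⟨⟨hb, hdom⟩, -⟩ := hf
  -- the modified restriction
  set g : β → ℕ := fun y => if y = v then max (f (x, v)) 1 else f (x, y) with hg
  -- neighbourhood of a non-root vertex in the product is the copy neighbourhood
  have hfilter : ∀ y : β, y ≠ v →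
      (univ.filter (fun w : α × β => (rootedProd G H v).Adj (x, y) w))
        = (univ.filter (fun y' => H.Adj y y')).image (fun y' => (x, y')) := by
    intro y hy
    ext ⟨x', y'⟩
    simp only [mem_filter, mem_univ, true_and, mem_image]
    simp only [rootedProd]
    constructor
    · rintro (⟨h1, h2⟩ | ⟨h1, -, -⟩)
      · exact ⟨y', h2, by rw [h1]⟩
      · exact absurd h1 hy
    · rintro ⟨y'', h1, h2⟩
      obtain ⟨rfl, rfl⟩ := Prod.mk.injEq .. ▸ h2
      exact Or.inl ⟨rfl, h1⟩
  have hfle : ∀ y : β, f (x, y) ≤ g y := by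
    intro y
    by_cases hy : y = v
    · simp only [hg, if_pos hy]; subst hy; simp
    · simp [hg, hy]
  -- g is an IDF on H
  have hgIDF : IsIDF H g := by
    constructor
    · intro y
      by_cases hy : y = v
      · simp only [hg, if_pos hy]
        exact max_le (hb (x, v)) one_le_two
      · simpa [hg, hy] using hb (x, y)
    · intro y hy0
      have hyv : y ≠ v := by
        intro h; subst h
        simp only [hg, if_pos rfl] at hy0
        omega
      have hf0 : f (x, y) = 0 := by simpa [hg, hyv] using hy0
      have h2 := hdom (x, y) hf0
      rw [hfilter y hyv, Finset.sum_image (by intro a _ b _ h; exact (Prod.mk.injEq .. ▸ h).2)]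
        at h2
      calc 2 ≤ ∑ y' ∈ univ.filter (fun y' => H.Adj y y'), f (x, y') := h2
        _ ≤ ∑ y' ∈ univ.filter (fun y' => H.Adj y y'), g y' :=
            Finset.sum_le_sum fun y' _ => hfle y'
  -- weight bound
  have hwt : ∑ y, g y ≤ copyWeight f x + 1 := by
    have : ∀ y : β, g y ≤ f (x, y) + (if y = v then 1 else 0) := by
      intro y
      by_cases hy : y = v
      · simp only [hg, if_pos hy, hy]
        exact max_le (Nat.le_succ _) (by simp)
      · simp [hg, hy]
    calc ∑ y, g y ≤ ∑ y, (f (x, y) + (if y = v then 1 else 0)) :=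
          Finset.sum_le_sum fun y _ => this y
      _ = copyWeight f x + 1 := by
          rw [Finset.sum_add_distrib, Finset.sum_ite_eq' univ v (fun _ => 1)]
          simp [copyWeight]
  have hle : italianNumber H ≤ copyWeight f x + 1 :=
    le_trans (Nat.sInf_le ⟨g, hgIDF, rfl⟩) hwt
  refine ⟨by omega, ?_⟩
  intro heq
  by_contra hne
  have hfv1 : 1 ≤ f (x, v) := Nat.one_le_iff_ne_zero.mpr hne
  have hgeq : ∀ y, g y = f (x, y) := by
    intro y
    by_cases hy : y = v
    · simp only [hg, if_pos hy]; subst hy; omega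
    · simp [hg, hy]
  have hle2 : italianNumber H ≤ copyWeight f x := by
    refine le_trans (Nat.sInf_le ⟨g, hgIDF, rfl⟩) ?_
    rw [copyWeight]
    exact le_of_eq (Finset.sum_congr rfl fun y _ => hgeq y)
  have hωpos : 1 ≤ copyWeight f x :=
    le_trans hfv1 (Finset.single_le_sum (f := fun y => f (x, y)) (fun _ _ => Nat.zero_le _)
      (mem_univ v))
  omega
end

section
/- Let G be a graph, H a graph with root vertex v ∈ V(H), and let f be a γ_I(G∘_v H)-function. Then the set A_f = {x ∈ V(G) : ω(f_x) ≥ γ_I(H)} is a dominating set of G. -/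
open Finset

open scoped Classical

lemma sum_nbhd {α β : Type*} [Fintype α] [Fintype β]
    (G : SimpleGraph α) (H : SimpleGraph β) (v : β) (f : α × β → ℕ) (x : α) (y : β) :
    ∑ w ∈ Finset.univ.filter (fun w => (rootedProd G H v).Adj (x, y) w), f w
      = (∑ y' ∈ Finset.univ.filter (fun y' => H.Adj y y'), f (x, y'))
        + (if y = v then ∑ x' ∈ Finset.univ.filter (fun x' => G.Adj x x'), f (x', v) else 0) := by
  rw [Finset.sum_filter, Fintype.sum_prod_type]
  have key : ∀ x' y',
      (if (rootedProd G H v).Adj (x, y) (x', y') then f (x', y') else 0)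
      = (if x = x' ∧ H.Adj y y' then f (x', y') else 0)
        + (if y = v ∧ y' = v ∧ G.Adj x x' then f (x', y') else 0) := by
    intro x' y'
    have hadj : (rootedProd G H v).Adj (x, y) (x', y') ↔
        ((x = x' ∧ H.Adj y y') ∨ (y = v ∧ y' = v ∧ G.Adj x x')) := Iff.rfl
    rw [if_congr hadj rfl rfl]
    by_cases hA : x = x' ∧ H.Adj y y' <;> by_cases hB : y = v ∧ y' = v ∧ G.Adj x x'
    · exact absurd (hA.1 ▸ hB.2.2) (G.irrefl)
    · simp [hA, hB]
    · simp [hA, hB]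
    · simp [hA, hB]
  simp only [key, Finset.sum_add_distrib]
  congr 1
  · have h1 : ∀ x' : α, (∑ y' : β, if (x = x' ∧ H.Adj y y') then f (x', y') else 0)
        = if x = x' then (∑ y' : β, if H.Adj y y' then f (x', y') else 0) else 0 := by
      intro x'
      by_cases h : x = x' <;> simp [h]
    simp only [h1]
    rw [Finset.sum_ite_eq Finset.univ x fun x' => ∑ y' : β, if H.Adj y y' then f (x', y') else 0]
    simp [Finset.sum_filter]
  · by_cases hy : y = v
    · simp only [hy, true_and, if_true]
      have h2 : ∀ x' : α, (∑ y' : β, if (y' = v ∧ G.Adj x x') then f (x', y') else 0)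
          = if G.Adj x x' then f (x', v) else 0 := by
        intro x'
        by_cases h : G.Adj x x' <;> simp [h]
      simp [h2, Finset.sum_filter]
    · simp [hy]

/-- Lemma 2: for a γ_I(G∘_v H)-function f, the set
A_f = {x ∈ V(G) : ω(f_x) ≥ γ_I(H)} is a dominating set of G. -/
theorem stmt1 {α β : Type*} [Fintype α] [Nonempty α] [Fintype β]
    (G : SimpleGraph α) (H : SimpleGraph β) (v : β)
    (f : α × β → ℕ) (hf : IsMinIDF (rootedProd G H v) f) :
    IsDomSet G {x : α | italianNumber H ≤ copyWeight f x} := by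
  obtain ⟨⟨hle2, hidf⟩, -⟩ := hf
  intro x hx
  simp only [Set.mem_setOf_eq, not_le] at hx
  have hnot : ¬ IsIDF H (fun y => f (x, y)) := by
    intro hIDF
    have : italianNumber H ≤ copyWeight f x := Nat.sInf_le ⟨fun y => f (x, y), hIDF, rfl⟩
    omega
  rw [IsIDF, not_and_or] at hnot
  have hfail := hnot.resolve_left (not_not_intro fun u => hle2 (x, u))
  push_neg at hfail
  obtain ⟨y, hy0, hylt⟩ := hfail
  have hyv : y = v := by
    by_contra hyv
    have h2 := hidf (x, y) hy0
    rw [sum_nbhd] at h2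
    simp only [if_neg hyv, add_zero] at h2
    omega
  rw [hyv] at hy0 hylt
  have h2 := hidf (x, v) hy0
  rw [sum_nbhd, if_pos rfl] at h2
  obtain ⟨x', hx'mem, hx'pos⟩ :
      ∃ x' ∈ Finset.univ.filter (fun x' => G.Adj x x'), 1 ≤ f (x', v) := by
    by_contra hc
    push_neg at hc
    have hz : ∑ x' ∈ Finset.univ.filter (fun x' => G.Adj x x'), f (x', v) = 0 :=
      Finset.sum_eq_zero fun a ha => by have := hc a ha; omega
    omega
  simp only [Finset.mem_filter, Finset.mem_univ, true_and] at hx'mem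
  refine ⟨x', ?_, hx'mem⟩
  show italianNumber H ≤ copyWeight f x'
  apply Nat.sInf_le
  refine ⟨fun y => f (x', y), ⟨fun u => hle2 _, ?_⟩, rfl⟩
  intro u hu
  have hu' : f (x', u) = 0 := hu
  have huv : u ≠ v := by rintro rfl; omega
  have h3 := hidf (x', u) hu
  rw [sum_nbhd] at h3
  simpa [huv] using h3
end

section
/- Let G be a graph, H a graph with root vertex v ∈ V(H), and let f be a γ_I(G∘_v H)-function such that B_f = {x ∈ V(G) : ω(f_x) = γ_I(H) − 1} is nonempty. Then for every x ∈ A_f = {x ∈ V(G) : ω(f_x) ≥ γ_I(H)} with f(x) ∈ {0,1} one has ω(f_x) = γ_I(H), and for every x ∈ A_f with f(x) = 2 one has ω(f_x) ≤ γ_I(H) + 1. -/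
open Finset

open scoped Classical

lemma neighborSum_nonroot {α β : Type*} [Fintype α] [Fintype β]
    (G : SimpleGraph α) (H : SimpleGraph β) (v : β) (g : α × β → ℕ)
    (x : α) (y : β) (hy : y ≠ v) :
    ∑ p ∈ Finset.univ.filter (fun p => (rootedProd G H v).Adj (x, y) p), g p
      = ∑ u ∈ Finset.univ.filter (fun u => H.Adj y u), g (x, u) := by
  refine Finset.sum_nbij' (fun p => p.2) (fun u => (x, u)) ?_ ?_ ?_ ?_ ?_
  · intro p hp
    simp only [mem_filter, mem_univ, true_and] at hp ⊢
    rcases hp with ⟨h1, h2⟩ | ⟨h1, _⟩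
    · exact h2
    · exact absurd h1 hy
  · intro u hu
    simp only [mem_filter, mem_univ, true_and] at hu ⊢
    exact Or.inl ⟨rfl, hu⟩
  · rintro ⟨p1, p2⟩ hp
    simp only [mem_filter, mem_univ, true_and] at hp
    rcases hp with ⟨h1, _⟩ | ⟨h1, _⟩
    · simp only at h1 ⊢
      rw [← h1]
    · exact absurd h1 hy
  · intro u hu; rfl
  · rintro ⟨p1, p2⟩ hp
    simp only [mem_filter, mem_univ, true_and] at hp
    rcases hp with ⟨h1, _⟩ | ⟨h1, _⟩
    · simp only at h1 ⊢
      rw [← h1]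
    · exact absurd h1 hy

lemma italian_pos {β : Type*} [Fintype β] [Nonempty β] (H : SimpleGraph β) :
    1 ≤ italianNumber H := by
  have hne : {n | ∃ f : β → ℕ, IsIDF H f ∧ ∑ u, f u = n}.Nonempty := by
    refine ⟨∑ u : β, 2, fun _ => 2, ⟨fun u => le_rfl, fun u h => by simp at h⟩, rfl⟩
  by_contra h
  have h0 : italianNumber H = 0 := by omega
  have hmem := Nat.sInf_mem hne
  rw [italianNumber] at h0
  rw [h0] at hmem
  obtain ⟨f, hidf, hsum⟩ := hmem
  have hz : ∀ u, f u = 0 := by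
    intro u
    have := Finset.sum_eq_zero_iff.mp hsum u (mem_univ u)
    exact this
  have h2 := hidf.2 (Classical.arbitrary β) (hz _)
  have h3 : (2:ℕ) ≤ 0 := le_trans h2 (le_of_eq (Finset.sum_eq_zero fun w _ => hz w))
  exact absurd h3 (by decide)

/-- Lemma 3: for a γ_I(G∘_v H)-function f with B_f ≠ ∅, every
x ∈ A_f with f(x) ∈ {0,1} has ω(f_x) = γ_I(H), and every x ∈ A_f with f(x) = 2
has ω(f_x) ≤ γ_I(H) + 1. -/
theorem stmt2 {α β : Type*} [Fintype α] [Nonempty α] [Fintype β]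
    (G : SimpleGraph α) (H : SimpleGraph β) (v : β)
    (f : α × β → ℕ) (hf : IsMinIDF (rootedProd G H v) f)
    (hB : ∃ x : α, copyWeight f x = italianNumber H - 1) :
    (∀ x : α, italianNumber H ≤ copyWeight f x → (f (x, v) = 0 ∨ f (x, v) = 1) →
      copyWeight f x = italianNumber H) ∧
    (∀ x : α, italianNumber H ≤ copyWeight f x → f (x, v) = 2 →
      copyWeight f x ≤ italianNumber H + 1) := by
  obtain ⟨x₀, hx₀⟩ := hB
  haveI : Nonempty β := ⟨v⟩
  set n := italianNumber H with hn_def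
  have hn : 1 ≤ n := italian_pos H
  have hx₀v : f (x₀, v) = 0 := by
    by_contra h0
    have hidf : IsIDF H (fun y => f (x₀, y)) := by
      refine ⟨fun y => hf.1.1 _, fun y hy => ?_⟩
      have hyv : y ≠ v := fun h => h0 (h ▸ hy)
      have h2 := hf.1.2 (x₀, y) hy
      rwa [neighborSum_nonroot G H v f x₀ y hyv] at h2
    have hle : n ≤ ∑ y, f (x₀, y) := Nat.sInf_le ⟨_, hidf, rfl⟩
    have hcw : copyWeight f x₀ = ∑ y, f (x₀, y) := rfl
    omega
  have key : ∀ x : α, copyWeight f x ≤ n - 1 + max 1 (f (x, v)) := by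
    intro x
    by_contra hgt
    push_neg at hgt
    set k := max 1 (f (x, v)) with hk_def
    have hk1 : 1 ≤ k := le_max_left _ _
    have hk2 : k ≤ 2 := max_le one_le_two (hf.1.1 (x, v))
    set f' : α × β → ℕ :=
      fun p => if p.1 = x then (if p.2 = v then k else f (x₀, p.2)) else f p with hf'_def
    have hf'root : ∀ z, f (z, v) ≤ f' (z, v) := by
      intro z
      by_cases hz : z = x
      · have he : f' (z, v) = k := by simp [hf'_def, hz]
        rw [he, hk_def, hz]
        exact le_max_right _ _
      · simp [hf'_def, hz]
    have hidf' : IsIDF (rootedProd G H v) f' := by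
      constructor
      · intro p
        simp only [hf'_def]
        split
        · split
          · exact hk2
          · exact hf.1.1 _
        · exact hf.1.1 _
      · rintro ⟨z, y⟩ hzy
        by_cases hz : z = x
        · by_cases hy : y = v
          · exfalso
            have he : f' (z, y) = k := by simp [hf'_def, hz, hy]
            rw [he] at hzy
            omega
          · have hy0 : f (x₀, y) = 0 := by simpa [hf'_def, hz, hy] using hzy
            have h2 := hf.1.2 (x₀, y) hy0
            rw [neighborSum_nonroot G H v f x₀ y hy] at h2
            rw [hz, neighborSum_nonroot G H v f' x y hy]
            refine le_trans h2 (Finset.sum_le_sum ?_)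
            intro u hu
            by_cases huv : u = v
            · subst huv
              rw [hx₀v]
              exact Nat.zero_le _
            · simp [hf'_def, huv]
        · have h0 : f (z, y) = 0 := by simpa [hf'_def, hz] using hzy
          have h2 := hf.1.2 (z, y) h0
          refine le_trans h2 (Finset.sum_le_sum ?_)
          rintro ⟨z', u⟩ hu
          simp only [mem_filter, mem_univ, true_and] at hu
          rcases hu with ⟨h1, _⟩ | ⟨_, h1, _⟩
          · have hz' : z' ≠ x := by
              simp only at h1
              rw [← h1]
              exact hz
            simp [hf'_def, hz']
          · simp only at h1
            subst h1
            exact hf'root z'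
    have e1 : (∑ y, f' (x, y)) = k + ∑ y ∈ univ.erase v, f (x₀, y) := by
      rw [← Finset.add_sum_erase univ (fun y => f' (x, y)) (mem_univ v)]
      congr 1
      · simp [hf'_def]
      · exact Finset.sum_congr rfl fun y hy => by
          simp [hf'_def, Finset.ne_of_mem_erase hy]
    have e2 : copyWeight f x₀ = ∑ y ∈ univ.erase v, f (x₀, y) := by
      rw [copyWeight, ← Finset.add_sum_erase univ (fun y => f (x₀, y)) (mem_univ v)]
      simp [hx₀v]
    have hw_x : (∑ y, f' (x, y)) < ∑ y, f (x, y) := by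
      have hcw : copyWeight f x = ∑ y, f (x, y) := rfl
      omega
    have hlt : (∑ p, f' p) < ∑ p, f p := by
      rw [Fintype.sum_prod_type, Fintype.sum_prod_type]
      refine Finset.sum_lt_sum (fun z _ => ?_) ⟨x, mem_univ x, hw_x⟩
      by_cases hz : z = x
      · rw [hz]
        exact le_of_lt hw_x
      · simp [hf'_def, hz]
    have hle : italianNumber (rootedProd G H v) ≤ ∑ p, f' p :=
      Nat.sInf_le ⟨f', hidf', rfl⟩
    have hw := hf.2
    omega
  constructor
  · intro x hx h01
    have hk := key x
    have hm : max 1 (f (x, v)) = 1 := by rcases h01 with h | h <;> simp [h]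
    omega
  · intro x hx h2
    have hk := key x
    rw [h2] at hk
    have hm : max 1 2 = 2 := rfl
    omega
end

section
/- For any graph G, any graph H and any vertex v ∈ V(H), the Italian domination number of the rooted product satisfies exactly one of: γ_I(G∘_v H) = n(G)·(γ_I(H) − 1) + γ(G), or γ_I(G∘_v H) = n(G)·(γ_I(H) − 1) + γ_I(G), or γ_I(G∘_v H) = n(G)·γ_I(H). -/
open Finset

open scoped Classical

section Helpers

variable {γ : Type*} [Fintype γ]

lemma isIDF_one (G : SimpleGraph γ) : IsIDF G (fun _ => 1) :=
  ⟨fun _ => one_le_two, fun _ h => absurd h one_ne_zero⟩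

lemma italian_le (G : SimpleGraph γ) {f : γ → ℕ} (hf : IsIDF G f) :
    italianNumber G ≤ ∑ u, f u :=
  Nat.sInf_le ⟨f, hf, rfl⟩

lemma exists_minIDF (G : SimpleGraph γ) :
    ∃ f : γ → ℕ, IsIDF G f ∧ ∑ u, f u = italianNumber G := by
  have hne : {n | ∃ f : γ → ℕ, IsIDF G f ∧ ∑ u, f u = n}.Nonempty :=
    ⟨∑ _u : γ, (1:ℕ), fun _ => 1, isIDF_one G, rfl⟩
  exact Nat.sInf_mem hne

lemma dom_le (G : SimpleGraph γ) {D : Finset γ} (hD : IsDomSet G ↑D) :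
    dominationNumber G ≤ D.card :=
  Nat.sInf_le ⟨D, hD, rfl⟩

lemma exists_minDom (G : SimpleGraph γ) :
    ∃ D : Finset γ, IsDomSet G ↑D ∧ D.card = dominationNumber G := by
  have hne : {n | ∃ D : Finset γ, IsDomSet G ↑D ∧ D.card = n}.Nonempty :=
    ⟨(univ : Finset γ).card, univ, by intro u hu; simp at hu, rfl⟩
  exact Nat.sInf_mem hne

lemma one_le_italian (G : SimpleGraph γ) [Nonempty γ] : 1 ≤ italianNumber G := by
  obtain ⟨f, hf, hsum⟩ := exists_minIDF G
  rcases Nat.eq_zero_or_pos (italianNumber G) with h0 | h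
  · exfalso
    rw [h0] at hsum
    have hz : ∀ u, f u = 0 := fun u =>
      (Finset.sum_eq_zero_iff.mp hsum) u (mem_univ u)
    obtain ⟨u⟩ := ‹Nonempty γ›
    have h2 := hf.2 u (hz u)
    have h3 : ∑ w ∈ univ.filter (fun w => G.Adj u w), f w = 0 :=
      Finset.sum_eq_zero fun w _ => hz w
    omega
  · exact h

lemma italian_le_card (G : SimpleGraph γ) : italianNumber G ≤ Fintype.card γ := by
  have := italian_le G (isIDF_one G)
  simpa using this

lemma dom_le_italian (G : SimpleGraph γ) : dominationNumber G ≤ italianNumber G := by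
  obtain ⟨f, hf, hsum⟩ := exists_minIDF G
  have hD : IsDomSet G ↑(univ.filter fun u => f u ≠ 0) := by
    intro u hu
    have hu0 : f u = 0 := by
      by_contra h
      exact hu (by simp [h])
    have h2 := hf.2 u hu0
    have hex : ∃ w ∈ univ.filter (fun w => G.Adj u w), f w ≠ 0 := by
      by_contra hall
      push_neg at hall
      have : ∑ w ∈ univ.filter (fun w => G.Adj u w), f w = 0 :=
        Finset.sum_eq_zero fun w hw => hall w hw
      omega
    obtain ⟨w, hw, hwne⟩ := hex
    simp only [mem_filter, mem_univ, true_and] at hw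
    exact ⟨w, by simp [hwne], hw⟩
  calc dominationNumber G ≤ (univ.filter fun u => f u ≠ 0).card := dom_le G hD
    _ = ∑ u ∈ univ.filter (fun u => f u ≠ 0), 1 := by rw [Finset.card_eq_sum_ones]
    _ ≤ ∑ u ∈ univ.filter (fun u => f u ≠ 0), f u :=
        Finset.sum_le_sum fun u hu =>
          Nat.one_le_iff_ne_zero.mpr (mem_filter.mp hu).2
    _ ≤ ∑ u, f u := Finset.sum_le_sum_of_subset (subset_univ _)
    _ = _ := hsum

end Helpers

section Rooted

variable {α β : Type*} [Fintype α] [Fintype β]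

lemma nbr_sum (G : SimpleGraph α) (H : SimpleGraph β) (v : β)
    (f : α × β → ℕ) (x : α) (y : β) :
    ∑ w ∈ Finset.univ.filter (fun w => (rootedProd G H v).Adj (x, y) w), f w
      = (∑ b ∈ Finset.univ.filter (fun b => H.Adj y b), f (x, b))
        + (if y = v then ∑ a ∈ Finset.univ.filter (fun a => G.Adj x a), f (a, v) else 0) := by
  rw [Finset.sum_filter, Fintype.sum_prod_type]
  have key : ∀ a b, (if (rootedProd G H v).Adj (x, y) (a, b) then f (a, b) else 0)
      = (if x = a ∧ H.Adj y b then f (a, b) else 0)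
        + (if y = v ∧ b = v ∧ G.Adj x a then f (a, b) else 0) := by
    intro a b
    by_cases h1 : x = a ∧ H.Adj y b
    · have h2 : ¬ (y = v ∧ b = v ∧ G.Adj x a) := by
        rintro ⟨-, rfl, hadj⟩
        exact G.loopless.irrefl x (h1.1 ▸ hadj)
      have hadj : (rootedProd G H v).Adj (x, y) (a, b) := Or.inl h1
      rw [if_pos hadj, if_pos h1, if_neg h2]; omega
    · by_cases h2 : y = v ∧ b = v ∧ G.Adj x a
      · have hadj : (rootedProd G H v).Adj (x, y) (a, b) := Or.inr h2
        rw [if_pos hadj, if_neg h1, if_pos h2]; omega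
      · have hadj : ¬ (rootedProd G H v).Adj (x, y) (a, b) := by
          rintro (h | h)
          · exact h1 h
          · exact h2 h
        rw [if_neg hadj, if_neg h1, if_neg h2]
  simp_rw [key, Finset.sum_add_distrib]
  congr 1
  · rw [Finset.sum_filter]
    simp_rw [ite_and]
    rw [Finset.sum_comm]
    simp [Finset.sum_ite_eq]
  · by_cases hyv : y = v
    · simp only [hyv, true_and, if_true]
      rw [Finset.sum_filter]
      have h3 : ∀ a, (∑ b, if b = v ∧ G.Adj x a then f (a, b) else 0)
          = (if G.Adj x a then f (a, v) else 0) := by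
        intro a
        simp_rw [ite_and]
        simp [Finset.sum_ite_eq']
      simp_rw [h3]
    · simp [hyv]

end Rooted

/-- Sum of f over the neighbours of the root inside copy x. -/
noncomputable def sRoot {α β : Type*} [Fintype β] (H : SimpleGraph β) (v : β) (f : α × β → ℕ) (x : α) : ℕ :=
  ∑ b ∈ Finset.univ.filter (fun b => H.Adj v b), f (x, b)

/-- Sum of f over the root-neighbours of the root of copy x. -/
noncomputable def rRoot {α β : Type*} [Fintype α] (G : SimpleGraph α) (v : β) (f : α × β → ℕ) (x : α) : ℕ :=
  ∑ a ∈ Finset.univ.filter (fun a => G.Adj x a), f (a, v)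

section Copies

variable {α β : Type*} [Fintype α] [Fintype β]
variable {G : SimpleGraph α} {H : SimpleGraph β} {v : β} {f : α × β → ℕ}

lemma sum_copies (f : α × β → ℕ) : ∑ p : α × β, f p = ∑ x, copyWeight f x := by
  rw [Fintype.sum_prod_type]
  rfl

lemma zero_nonroot (hf : IsIDF (rootedProd G H v) f) {x : α} {b : β}
    (hb : b ≠ v) (h0 : f (x, b) = 0) :
    2 ≤ ∑ b' ∈ Finset.univ.filter (fun b' => H.Adj b b'), f (x, b') := by
  have h := hf.2 (x, b) h0
  rw [nbr_sum] at h
  simpa [hb] using h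

lemma copy_ge_of_root_pos (hf : IsIDF (rootedProd G H v) f) {x : α}
    (h : f (x, v) ≠ 0) : italianNumber H ≤ copyWeight f x := by
  apply italian_le H (f := fun b => f (x, b))
  refine ⟨fun b => hf.1 (x, b), ?_⟩
  intro b h0
  have hb : b ≠ v := by
    intro e
    rw [e] at h0
    exact h h0
  exact zero_nonroot hf hb h0

lemma copy_ge_of_s2 (hf : IsIDF (rootedProd G H v) f) {x : α}
    (h : 2 ≤ sRoot H v f x) : italianNumber H ≤ copyWeight f x := by
  apply italian_le H (f := fun b => f (x, b))
  refine ⟨fun b => hf.1 (x, b), ?_⟩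
  intro b h0
  by_cases hb : b = v
  · rw [hb]
    exact h
  · exact zero_nonroot hf hb h0

lemma copy_lb (hf : IsIDF (rootedProd G H v) f) (x : α) :
    italianNumber H ≤ copyWeight f x + 1 := by
  by_cases hx : f (x, v) = 0
  · have hg : IsIDF H (fun b => if b = v then 1 else f (x, b)) := by
      constructor
      · intro b
        dsimp only
        split
        · omega
        · exact hf.1 (x, b)
      · intro b h0
        dsimp only at h0
        have hb : b ≠ v := by
          intro e
          rw [if_pos e] at h0
          omega
        rw [if_neg hb] at h0
        have h2 := zero_nonroot hf hb h0
        refine le_trans h2 (Finset.sum_le_sum ?_)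
        intro b' _
        split
        · rename_i hbv
          rw [hbv, hx]
          omega
        · exact le_refl _
    have h1 := italian_le H hg
    have h2 : ∑ b, (if b = v then 1 else f (x, b)) ≤ copyWeight f x + 1 := by
      have hpt : ∀ b ∈ Finset.univ, (if b = v then 1 else f (x, b))
          ≤ f (x, b) + (if b = v then 1 else 0) := by
        intro b _
        split <;> omega
      calc ∑ b, (if b = v then 1 else f (x, b))
          ≤ ∑ b, (f (x, b) + if b = v then 1 else 0) := Finset.sum_le_sum hpt
        _ = copyWeight f x + 1 := by
            rw [Finset.sum_add_distrib]
            congr 1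
            simp [Finset.sum_ite_eq']
    omega
  · have := copy_ge_of_root_pos hf hx
    omega

lemma deficient (hf : IsIDF (rootedProd G H v) f) {x : α}
    (h : ¬ italianNumber H ≤ copyWeight f x) :
    f (x, v) = 0 ∧ sRoot H v f x ≤ 1 ∧ 2 ≤ sRoot H v f x + rRoot G v f x := by
  have h1 : f (x, v) = 0 := by
    by_contra hne
    exact h (copy_ge_of_root_pos hf hne)
  have h2 : sRoot H v f x ≤ 1 := by
    by_contra hge
    push_neg at hge
    exact h (copy_ge_of_s2 hf hge)
  have h3 := hf.2 (x, v) h1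
  rw [nbr_sum, if_pos rfl] at h3
  exact ⟨h1, h2, h3⟩

end Copies

section Bounds

variable {α β : Type*} [Fintype α] [Fintype β]
variable (G : SimpleGraph α) (H : SimpleGraph β) (v : β)

lemma card_filter_mem (B : Finset α) :
    ∑ x : α, (if x ∈ B then 1 else 0) = B.card := by
  rw [Finset.sum_ite_mem, Finset.univ_inter]
  simp

lemma ub_nk :
    italianNumber (rootedProd G H v) ≤ Fintype.card α * italianNumber H := by
  obtain ⟨g, hg, hsum⟩ := exists_minIDF H
  have hF : IsIDF (rootedProd G H v) (fun p => g p.2) := by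
    refine ⟨fun p => hg.1 p.2, ?_⟩
    rintro ⟨x, y⟩ h0
    rw [nbr_sum]
    have h2 := hg.2 y h0
    exact le_trans h2 (Nat.le_add_right _ _)
  have h1 := italian_le _ hF
  have h2 : ∑ p : α × β, g p.2 = Fintype.card α * italianNumber H := by
    rw [Fintype.sum_prod_type]
    simp [hsum, Finset.card_univ]
  omega

lemma lb_main [Nonempty α] {k' : ℕ} (hk : italianNumber H = k' + 1) :
    Fintype.card α * k' + dominationNumber G ≤ italianNumber (rootedProd G H v) := by
  obtain ⟨f, hf, hsum⟩ := exists_minIDF (rootedProd G H v)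
  set B : Finset α := Finset.univ.filter
    (fun x => italianNumber H ≤ copyWeight f x) with hB
  have hdom : IsDomSet G ↑B := by
    intro x hx
    have hxB : ¬ italianNumber H ≤ copyWeight f x := by
      intro hge
      exact hx (by simp [hB, hge])
    obtain ⟨h1, h2, h3⟩ := deficient hf hxB
    have hr : 1 ≤ rRoot G v f x := by omega
    have hex : ∃ u ∈ Finset.univ.filter (fun a => G.Adj x a), f (u, v) ≠ 0 := by
      by_contra hall
      push_neg at hall
      have h4 : rRoot G v f x = 0 := Finset.sum_eq_zero fun a ha => hall a ha
      omega
    obtain ⟨u, hu, hune⟩ := hex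
    simp only [Finset.mem_filter, Finset.mem_univ, true_and] at hu
    refine ⟨u, ?_, hu⟩
    have := copy_ge_of_root_pos hf hune
    simp [hB, this]
  have hcard : dominationNumber G ≤ B.card := dom_le G hdom
  have hsum2 : Fintype.card α * k' + B.card ≤ ∑ x, copyWeight f x := by
    have hpt : ∀ x ∈ Finset.univ, k' + (if x ∈ B then 1 else 0) ≤ copyWeight f x := by
      intro x _
      by_cases hxB : italianNumber H ≤ copyWeight f x
      · have hxB' : x ∈ B := by simp [hB, hxB]
        rw [if_pos hxB']
        omega
      · have hxB' : x ∉ B := by simp [hB, hxB]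
        have := copy_lb hf x
        rw [if_neg hxB']
        omega
    calc Fintype.card α * k' + B.card
        = ∑ x : α, (k' + if x ∈ B then 1 else 0) := by
          rw [Finset.sum_add_distrib, card_filter_mem]
          simp [Finset.card_univ, mul_comm]
      _ ≤ ∑ x, copyWeight f x := Finset.sum_le_sum hpt
  rw [← hsum, sum_copies]
  omega

lemma ub_italG {k' : ℕ} (hk : italianNumber H = k' + 1)
    (hlt : italianNumber (rootedProd G H v) < Fintype.card α * italianNumber H) :
    italianNumber (rootedProd G H v) ≤ Fintype.card α * k' + italianNumber G := by
  obtain ⟨f, hf, hsum⟩ := exists_minIDF (rootedProd G H v)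
  have hex : ∃ x, ¬ italianNumber H ≤ copyWeight f x := by
    by_contra hall
    push_neg at hall
    have h1 : Fintype.card α * italianNumber H ≤ ∑ x, copyWeight f x := by
      calc Fintype.card α * italianNumber H = ∑ _x : α, italianNumber H := by
            simp [Finset.card_univ, mul_comm]
        _ ≤ ∑ x, copyWeight f x := Finset.sum_le_sum fun x _ => hall x
    rw [← sum_copies, hsum] at h1
    omega
  obtain ⟨x, hx⟩ := hex
  obtain ⟨hxv, hs, hsr⟩ := deficient hf hx
  have hcw : copyWeight f x = k' := by
    have := copy_lb hf x
    omega
  obtain ⟨w, hw, hwsum⟩ := exists_minIDF G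
  set F : α × β → ℕ := fun p => if p.2 = v then w p.1 else f (x, p.2) with hFdef
  have hFidf : IsIDF (rootedProd G H v) F := by
    constructor
    · intro p
      by_cases hp : p.2 = v
      · simpa [hFdef, hp] using hw.1 p.1
      · simpa [hFdef, hp] using hf.1 (x, p.2)
    · rintro ⟨a, b⟩ h0
      rw [nbr_sum]
      by_cases hb : b = v
      · have ha0 : w a = 0 := by
          have : F (a, b) = w a := by simp [hFdef, hb]
          omega
        have h2 := hw.2 a ha0
        have h3 : ∑ c ∈ Finset.univ.filter (fun c => G.Adj a c), F (c, v)
            = ∑ c ∈ Finset.univ.filter (fun c => G.Adj a c), w c :=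
          Finset.sum_congr rfl fun c _ => by simp [hFdef]
        rw [hb, if_pos rfl, h3]
        omega
      · have hb0 : f (x, b) = 0 := by
          have : F (a, b) = f (x, b) := by simp [hFdef, hb]
          omega
        have h2 := zero_nonroot hf hb hb0
        have hle : ∑ b' ∈ Finset.univ.filter (fun b' => H.Adj b b'), f (x, b')
            ≤ ∑ b' ∈ Finset.univ.filter (fun b' => H.Adj b b'), F (a, b') := by
          refine Finset.sum_le_sum ?_
          intro b' _
          by_cases hb' : b' = v
          · simp [hFdef, hb', hxv]
          · simp [hFdef, hb']
        omega
  have hweight : ∑ p, F p = Fintype.card α * k' + italianNumber G := by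
    rw [Fintype.sum_prod_type]
    have hcopy : ∀ a, ∑ b, F (a, b) = k' + w a := by
      intro a
      have hpt : ∀ b, F (a, b) = f (x, b) + (if b = v then w a else 0) := by
        intro b
        by_cases hb : b = v <;> simp [hFdef, hb, hxv]
      simp_rw [hpt]
      rw [Finset.sum_add_distrib, Finset.sum_ite_eq' Finset.univ v (fun _ => w a)]
      have : ∑ b, f (x, b) = k' := hcw
      simp [this]
    simp_rw [hcopy]
    rw [Finset.sum_add_distrib, hwsum]
    simp [Finset.card_univ, mul_comm]
  have := italian_le _ hFidf
  omega

end Bounds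

section Final

variable {α β : Type*} [Fintype α] [Fintype β]
variable (G : SimpleGraph α) (H : SimpleGraph β) (v : β)

lemma ub_domG {k' : ℕ} (hk : italianNumber H = k' + 1)
    (hlt : italianNumber (rootedProd G H v) < Fintype.card α * k' + italianNumber G) :
    italianNumber (rootedProd G H v) ≤ Fintype.card α * k' + dominationNumber G := by
  obtain ⟨f, hf, hsum⟩ := exists_minIDF (rootedProd G H v)
  obtain ⟨D, hD, hDcard⟩ := exists_minDom G
  by_cases hA : ∃ x, ¬ italianNumber H ≤ copyWeight f x ∧ sRoot H v f x = 1
  · -- Case A: some deficient copy has s_x = 1 : build an IDF of weight n k' + γ(G)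
    obtain ⟨x, hx, hs1⟩ := hA
    obtain ⟨hxv, -, -⟩ := deficient hf hx
    have hcw : copyWeight f x = k' := by
      have := copy_lb hf x
      omega
    set F : α × β → ℕ := fun p =>
      if p.2 = v then (if p.1 ∈ D then 1 else 0) else f (x, p.2) with hFdef
    have hFidf : IsIDF (rootedProd G H v) F := by
      constructor
      · intro p
        by_cases hp : p.2 = v
        · by_cases hp1 : p.1 ∈ D <;> simp [hFdef, hp, hp1]
        · simpa [hFdef, hp] using hf.1 (x, p.2)
      · rintro ⟨a, b⟩ h0
        rw [nbr_sum]
        by_cases hb : b = v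
        · rw [hb] at h0 ⊢
          have haD : a ∉ D := by
            by_contra haD
            simp [hFdef, haD] at h0
          obtain ⟨c, hcD, hcadj⟩ := hD a (by simpa using haD)
          have hcD' : c ∈ D := hcD
          have h1 : 1 ≤ ∑ c' ∈ Finset.univ.filter (fun c' => G.Adj a c'), F (c', v) := by
            have hmem : c ∈ Finset.univ.filter (fun c' => G.Adj a c') := by
              simp [hcadj]
            have hval : F (c, v) = 1 := by simp [hFdef, hcD']
            have hle : F (c, v) ≤ ∑ c' ∈ Finset.univ.filter (fun c' => G.Adj a c'), F (c', v) :=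
              Finset.single_le_sum (f := fun c' => F (c', v)) (fun c' _ => Nat.zero_le _) hmem
            omega
          have h2 : ∑ b' ∈ Finset.univ.filter (fun b' => H.Adj v b'), F (a, b') = 1 := by
            have : ∀ b' ∈ Finset.univ.filter (fun b' => H.Adj v b'),
                F (a, b') = f (x, b') := by
              intro b' hb'
              simp only [Finset.mem_filter, Finset.mem_univ, true_and] at hb'
              have hb'v : b' ≠ v := fun e => H.loopless.irrefl v (e ▸ hb')
              simp [hFdef, hb'v]
            rw [Finset.sum_congr rfl this]
            exact hs1
          rw [if_pos rfl, h2]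
          omega
        · have hb0 : f (x, b) = 0 := by
            have : F (a, b) = f (x, b) := by simp [hFdef, hb]
            omega
          have h2 := zero_nonroot hf hb hb0
          have hle : ∑ b' ∈ Finset.univ.filter (fun b' => H.Adj b b'), f (x, b')
              ≤ ∑ b' ∈ Finset.univ.filter (fun b' => H.Adj b b'), F (a, b') := by
            refine Finset.sum_le_sum ?_
            intro b' _
            by_cases hb' : b' = v
            · simp [hFdef, hb', hxv]
            · simp [hFdef, hb']
          omega
    have hweight : ∑ p, F p = Fintype.card α * k' + D.card := by
      rw [Fintype.sum_prod_type]
      have hcopy : ∀ a, ∑ b, F (a, b) = k' + (if a ∈ D then 1 else 0) := by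
        intro a
        have hpt : ∀ b, F (a, b) = f (x, b) + (if b = v then (if a ∈ D then 1 else 0) else 0) := by
          intro b
          by_cases hb : b = v <;> simp [hFdef, hb, hxv]
        simp_rw [hpt]
        rw [Finset.sum_add_distrib,
          Finset.sum_ite_eq' Finset.univ v (fun _ => if a ∈ D then 1 else 0)]
        have hcw' : ∑ b, f (x, b) = k' := hcw
        simp [hcw']
      simp_rw [hcopy]
      rw [Finset.sum_add_distrib, card_filter_mem]
      simp [Finset.card_univ, mul_comm]
    have := italian_le _ hFidf
    omega
  · -- Case B: every deficient copy has s_x = 0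
    push_neg at hA
    obtain ⟨h, hh⟩ : ∃ h : α → ℕ, ∀ y, h y = (if italianNumber H + 1 ≤ copyWeight f y then 2
      else if italianNumber H ≤ copyWeight f y then 1 else 0) :=
      ⟨fun y => if italianNumber H + 1 ≤ copyWeight f y then 2
        else if italianNumber H ≤ copyWeight f y then 1 else 0, fun y => rfl⟩
    have hbounds : ∀ u, h u ≤ 2 := by
      intro u
      rw [hh]
      split_ifs <;> omega
    have hpt : ∀ x ∈ Finset.univ, k' + h x ≤ copyWeight f x := by
      intro x _
      have hlb := copy_lb hf x
      rw [hh]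
      split_ifs <;> omega
    have hsumh : Fintype.card α * k' + ∑ x, h x ≤ italianNumber (rootedProd G H v) := by
      rw [← hsum, sum_copies]
      calc Fintype.card α * k' + ∑ x, h x = ∑ x : α, (k' + h x) := by
            rw [Finset.sum_add_distrib]
            simp [Finset.card_univ, mul_comm]
        _ ≤ ∑ x, copyWeight f x := Finset.sum_le_sum hpt
    have hnotIDF : ¬ IsIDF G h := by
      intro hIDF
      have := italian_le G hIDF
      omega
    have hex : ∃ x, h x = 0 ∧ ∑ c ∈ Finset.univ.filter (fun c => G.Adj x c), h c ≤ 1 := by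
      by_contra hall
      push_neg at hall
      exact hnotIDF ⟨hbounds, fun u h0 => hall u h0⟩
    obtain ⟨x, hx0, hxnb⟩ := hex
    have hxcw : ¬ italianNumber H ≤ copyWeight f x := by
      rw [hh] at hx0
      split_ifs at hx0 <;> omega
    obtain ⟨hxv, hs, hsr⟩ := deficient hf hxcw
    have hcw : copyWeight f x = k' := by
      have := copy_lb hf x
      omega
    have hs0 : sRoot H v f x = 0 := by
      have := hA x (by omega)
      omega
    have hr : 2 ≤ rRoot G v f x := by omega
    -- find the special neighbour u with f(u,v) = 2 and copy weight exactly γ_I(H)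
    have hexu : ∃ u ∈ Finset.univ.filter (fun c => G.Adj x c), 2 ≤ f (u, v) := by
      by_contra hall
      push_neg at hall
      have hle : rRoot G v f x ≤ ∑ c ∈ Finset.univ.filter (fun c => G.Adj x c), h c := by
        refine Finset.sum_le_sum ?_
        intro c hc
        rcases Nat.eq_zero_or_pos (f (c, v)) with h0 | hpos
        · rw [h0]
          exact Nat.zero_le _
        · have h1 : f (c, v) = 1 := by
            have := hall c hc
            omega
          have h2 : italianNumber H ≤ copyWeight f c := copy_ge_of_root_pos hf (by omega)
          have h3 : 1 ≤ h c := by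
            rw [hh]
            split_ifs <;> omega
          omega
      omega
    obtain ⟨u, huf, hu2⟩ := hexu
    have hufv : f (u, v) = 2 := le_antisymm (hf.1 _) hu2
    have hucw : italianNumber H ≤ copyWeight f u := copy_ge_of_root_pos hf (by omega)
    have hu_h1 : h u ≤ 1 :=
      le_trans (Finset.single_le_sum (fun c _ => Nat.zero_le (h c)) huf) hxnb
    have hucw2 : ¬ (italianNumber H + 1 ≤ copyWeight f u) := by
      intro hge
      have : h u = 2 := by
        rw [hh, if_pos hge]
      omega
    have hucw' : copyWeight f u = k' + 1 := by omega
    -- final construction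
    set F : α × β → ℕ := fun p => if p.1 ∈ D then f (u, p.2) else f (x, p.2) with hFdef
    have hFidf : IsIDF (rootedProd G H v) F := by
      constructor
      · intro p
        by_cases hp : p.1 ∈ D
        · simpa [hFdef, hp] using hf.1 (u, p.2)
        · simpa [hFdef, hp] using hf.1 (x, p.2)
      · rintro ⟨a, b⟩ h0
        rw [nbr_sum]
        by_cases haD : a ∈ D
        · have hb0 : f (u, b) = 0 := by
            have : F (a, b) = f (u, b) := by simp [hFdef, haD]
            omega
          have hb : b ≠ v := by
            intro e
            rw [e, hufv] at hb0
            omega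
          have h2 := zero_nonroot hf hb hb0
          have heq : ∑ b' ∈ Finset.univ.filter (fun b' => H.Adj b b'), F (a, b')
              = ∑ b' ∈ Finset.univ.filter (fun b' => H.Adj b b'), f (u, b') :=
            Finset.sum_congr rfl fun b' _ => by simp [hFdef, haD]
          rw [heq]
          omega
        · have hb0 : f (x, b) = 0 := by
            have : F (a, b) = f (x, b) := by simp [hFdef, haD]
            omega
          by_cases hb : b = v
          · rw [hb] at h0 ⊢
            obtain ⟨c, hcD, hcadj⟩ := hD a (by simpa using haD)
            have hcD' : c ∈ D := hcD
            have h1 : 2 ≤ ∑ c' ∈ Finset.univ.filter (fun c' => G.Adj a c'), F (c', v) := by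
              have hmem : c ∈ Finset.univ.filter (fun c' => G.Adj a c') := by
                simp [hcadj]
              have hval : F (c, v) = 2 := by simp [hFdef, hcD', hufv]
              have hle : F (c, v) ≤ ∑ c' ∈ Finset.univ.filter (fun c' => G.Adj a c'), F (c', v) :=
                Finset.single_le_sum (f := fun c' => F (c', v)) (fun c' _ => Nat.zero_le _) hmem
              omega
            rw [if_pos rfl]
            omega
          · have h2 := zero_nonroot hf hb hb0
            have heq : ∑ b' ∈ Finset.univ.filter (fun b' => H.Adj b b'), F (a, b')
                = ∑ b' ∈ Finset.univ.filter (fun b' => H.Adj b b'), f (x, b') :=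
              Finset.sum_congr rfl fun b' _ => by simp [hFdef, haD]
            rw [heq]
            omega
    have hweight : ∑ p, F p = Fintype.card α * k' + D.card := by
      rw [Fintype.sum_prod_type]
      have hcopy : ∀ a, ∑ b, F (a, b) = k' + (if a ∈ D then 1 else 0) := by
        intro a
        by_cases haD : a ∈ D
        · have : ∑ b, F (a, b) = copyWeight f u :=
            Finset.sum_congr rfl fun b _ => by simp [hFdef, haD]
          rw [this, hucw', if_pos haD]
        · have : ∑ b, F (a, b) = copyWeight f x :=
            Finset.sum_congr rfl fun b _ => by simp [hFdef, haD]
          rw [this, hcw, if_neg haD]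
          omega
      simp_rw [hcopy]
      rw [Finset.sum_add_distrib, card_filter_mem]
      simp [Finset.card_univ, mul_comm]
    have := italian_le _ hFidf
    omega

end Final


/-- Theorem, Trichotomy: for any G, H and v ∈ V(H),
γ_I(G∘_v H) equals n(G)(γ_I(H)−1)+γ(G), or n(G)(γ_I(H)−1)+γ_I(G), or n(G)γ_I(H). -/
theorem stmt5 {α β : Type*} [Fintype α] [Nonempty α] [Fintype β]
    (G : SimpleGraph α) (H : SimpleGraph β) (v : β) :
    italianNumber (rootedProd G H v) =
        Fintype.card α * (italianNumber H - 1) + dominationNumber G ∨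
      italianNumber (rootedProd G H v) =
        Fintype.card α * (italianNumber H - 1) + italianNumber G ∨
      italianNumber (rootedProd G H v) = Fintype.card α * italianNumber H := by
  haveI : Nonempty β := ⟨v⟩
  obtain ⟨k', hk⟩ : ∃ k', italianNumber H = k' + 1 :=
    ⟨italianNumber H - 1, by have := one_le_italian H; omega⟩
  have hk' : italianNumber H - 1 = k' := by omega
  rw [hk']
  have h5 := lb_main G H v hk
  have h4 := ub_nk G H v
  rcases eq_or_lt_of_le h4 with heq | hlt
  · right; right; exact heq
  · have h6 := ub_italG G H v hk hlt
    rcases eq_or_lt_of_le h6 with heq2 | hlt2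
    · right; left; exact heq2
    · left
      exact le_antisymm (ub_domG G H v hk hlt2) h5
end

section
/- For any graph G and the root vertex v one of the two vertices of the complete graph K_2, the Italian domination number of the rooted product satisfies γ_I(G∘_v K_2) = n(G) + γ(G). -/
open Finset

open scoped Classical

lemma fin2_cases : ∀ v y : Fin 2, y = v ∨ y = v + 1 := by decide

lemma fin2_succ_ne : ∀ v : Fin 2, v + 1 ≠ v := by decide

lemma sum_fin2 (v : Fin 2) (g : Fin 2 → ℕ) : ∑ y, g y = g v + g (v + 1) := by
  fin_cases v <;> simp [Fin.sum_univ_two, add_comm]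

lemma rp_adj {α : Type*} (G : SimpleGraph α) (v : Fin 2) (p q : α × Fin 2) :
    (rootedProd G (⊤ : SimpleGraph (Fin 2)) v).Adj p q ↔
      (p.1 = q.1 ∧ p.2 ≠ q.2) ∨ (p.2 = v ∧ q.2 = v ∧ G.Adj p.1 q.1) := by
  rfl

lemma leafFilter {α : Type*} [Fintype α] (G : SimpleGraph α) (v : Fin 2) (x : α) :
    Finset.univ.filter (fun w => (rootedProd G (⊤ : SimpleGraph (Fin 2)) v).Adj (x, v + 1) w)
      = {(x, v)} := by
  ext ⟨y, b⟩
  simp only [mem_filter, mem_univ, true_and, mem_singleton, Prod.mk.injEq, rp_adj]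
  constructor
  · rintro (⟨h1, h2⟩ | ⟨h1, -⟩)
    · rcases fin2_cases v b with hb | hb
      · exact ⟨h1.symm, hb⟩
      · exact absurd hb.symm h2
    · exact absurd h1 (fin2_succ_ne v)
  · rintro ⟨h1, h2⟩
    exact Or.inl ⟨h1.symm, by simpa [h2] using fin2_succ_ne v⟩

lemma rootSum {α : Type*} [Fintype α] (G : SimpleGraph α) (v : Fin 2)
    (f : α × Fin 2 → ℕ) (x : α) :
    ∑ w ∈ Finset.univ.filter
        (fun w => (rootedProd G (⊤ : SimpleGraph (Fin 2)) v).Adj (x, v) w), f w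
      = f (x, v + 1) + ∑ y ∈ Finset.univ.filter (fun y => G.Adj x y), f (y, v) := by
  classical
  rw [Finset.sum_filter, Fintype.sum_prod_type]
  have step1 : ∀ x' : α,
      (∑ b : Fin 2, if (rootedProd G (⊤ : SimpleGraph (Fin 2)) v).Adj (x, v) (x', b)
          then f (x', b) else 0)
        = (if G.Adj x x' then f (x', v) else 0) + (if x = x' then f (x', v + 1) else 0) := by
    intro x'
    rw [sum_fin2 v]
    congr 1
    · apply if_congr _ rfl rfl
      rw [rp_adj]
      simp [G.adj_comm]
    · apply if_congr _ rfl rfl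
      rw [rp_adj]
      simp [fin2_succ_ne v, (fin2_succ_ne v).symm]
  rw [Finset.sum_congr rfl fun x' _ => step1 x', Finset.sum_add_distrib]
  rw [Finset.sum_ite_eq Finset.univ x (fun y => f (y, v + 1)), if_pos (mem_univ x)]
  rw [← Finset.sum_filter]
  ring

lemma sum_two_one {α : Type*} [Fintype α] (D : Finset α) :
    ∑ x : α, (if x ∈ D then 2 else 1) = Fintype.card α + D.card := by
  classical
  have : ∀ x : α, (if x ∈ D then 2 else 1) = 1 + (if x ∈ D then 1 else 0) := by
    intro x; split <;> rfl
  rw [Finset.sum_congr rfl fun x _ => this x, Finset.sum_add_distrib]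
  rw [Finset.sum_const, smul_eq_mul, mul_one, Finset.sum_ite_mem, Finset.univ_inter,
    Finset.sum_const, smul_eq_mul, mul_one, Finset.card_univ]

/-- Corollary: for any graph G and any vertex v of K_2,
γ_I(G∘_v K_2) = n(G) + γ(G). -/
theorem stmt7 {α : Type*} [Fintype α] [Nonempty α] (G : SimpleGraph α) (v : Fin 2) :
    italianNumber (rootedProd G (⊤ : SimpleGraph (Fin 2)) v) =
      Fintype.card α + dominationNumber G := by
  classical
  set R := rootedProd G (⊤ : SimpleGraph (Fin 2)) v with hR
  -- a minimum dominating set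
  have hDomNe : {n | ∃ D : Finset α, IsDomSet G ↑D ∧ D.card = n}.Nonempty :=
    ⟨(Finset.univ : Finset α).card, Finset.univ, by intro u hu; simp at hu, rfl⟩
  obtain ⟨D, hDdom, hDcard⟩ := Nat.sInf_mem hDomNe
  have hDcard' : D.card = dominationNumber G := hDcard
  -- upper bound witness
  set fU : α × Fin 2 → ℕ :=
    fun p => if p.2 = v then (if p.1 ∈ D then 2 else 0) else (if p.1 ∈ D then 0 else 1)
    with hfU
  have hfU_v : ∀ x, fU (x, v) = if x ∈ D then 2 else 0 := by intro x; simp [hfU]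
  have hfU_o : ∀ x, fU (x, v + 1) = if x ∈ D then 0 else 1 := by
    intro x; simp [hfU, fin2_succ_ne v]
  have hweight : ∑ p, fU p = Fintype.card α + D.card := by
    rw [Fintype.sum_prod_type]
    rw [Finset.sum_congr rfl fun x _ => sum_fin2 v (fun b => fU (x, b))]
    have hx : ∀ x : α, fU (x, v) + fU (x, v + 1) = if x ∈ D then 2 else 1 := by
      intro x; rw [hfU_v, hfU_o]; split <;> rfl
    rw [Finset.sum_congr rfl fun x _ => hx x, sum_two_one]
  have hIDF : IsIDF R fU := by
    constructor
    · intro p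
      by_cases h : p.2 = v <;> simp only [hfU, h, if_true, if_false] <;> split <;> omega
    · rintro ⟨x, b⟩ h0
      rcases fin2_cases v b with hb | hb
      · rw [hb] at h0 ⊢
        have hx : x ∉ D := by
          by_contra hx
          rw [hfU_v x, if_pos hx] at h0
          omega
        obtain ⟨y, hyD, hadj⟩ := hDdom x (by simpa using hx)
        have hadj' : R.Adj (x, v) (y, v) := (rp_adj G v _ _).mpr (Or.inr ⟨rfl, rfl, hadj⟩)
        have hymem : (y, v) ∈ Finset.univ.filter (fun w => R.Adj (x, v) w) :=
          Finset.mem_filter.mpr ⟨Finset.mem_univ _, hadj'⟩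
        calc (2 : ℕ) = fU (y, v) := by rw [hfU_v y, if_pos (Finset.mem_coe.mp hyD)]
          _ ≤ _ := Finset.single_le_sum (fun i _ => Nat.zero_le _) hymem
      · rw [hb] at h0 ⊢
        have hx : x ∈ D := by
          by_contra hx
          rw [hfU_o x, if_neg hx] at h0
          omega
        rw [hR, leafFilter G v x, Finset.sum_singleton, hfU_v x, if_pos hx]
  have hItalNe : {n | ∃ f, IsIDF R f ∧ ∑ u, f u = n}.Nonempty := ⟨_, fU, hIDF, rfl⟩
  have hub : italianNumber R ≤ Fintype.card α + dominationNumber G := by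
    rw [← hDcard']
    exact Nat.sInf_le ⟨fU, hIDF, hweight⟩
  have hlb : Fintype.card α + dominationNumber G ≤ italianNumber R := by
    apply le_csInf hItalNe
    rintro n ⟨f, ⟨hle, hcond⟩, rfl⟩
    have key1 : ∀ x, f (x, v + 1) = 0 → 2 ≤ f (x, v) := by
      intro x h0
      have h := hcond (x, v + 1) h0
      rwa [hR, leafFilter G v x, Finset.sum_singleton] at h
    set Ds := Finset.univ.filter (fun x => 2 ≤ f (x, v) + f (x, v + 1)) with hDs
    have hmem : ∀ x, x ∈ Ds ↔ 2 ≤ f (x, v) + f (x, v + 1) := by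
      intro x; simp [hDs]
    have hdom : IsDomSet G ↑Ds := by
      intro x hx
      have hx1 : f (x, v) + f (x, v + 1) ≤ 1 := by
        have := (hmem x).not.mp (by simpa using hx)
        omega
      have hfv : f (x, v) = 0 ∧ f (x, v + 1) = 1 := by
        rcases Nat.eq_zero_or_pos (f (x, v + 1)) with h | h
        · exact absurd (key1 x h) (by omega)
        · omega
      have hsum := hcond (x, v) hfv.1
      rw [hR, rootSum G v f x, hfv.2] at hsum
      obtain ⟨y, hy, hfy⟩ :
          ∃ y ∈ Finset.univ.filter (fun y => G.Adj x y), f (y, v) ≠ 0 := by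
        by_contra hcon
        push_neg at hcon
        have hz := Finset.sum_eq_zero hcon
        omega
      have hyadj : G.Adj x y := (Finset.mem_filter.mp hy).2
      have hyD : 2 ≤ f (y, v) + f (y, v + 1) := by
        rcases Nat.eq_zero_or_pos (f (y, v + 1)) with h | h
        · have := key1 y h; omega
        · omega
      exact ⟨y, by simpa using (hmem y).mpr hyD, hyadj⟩
    have hγ : dominationNumber G ≤ Ds.card := Nat.sInf_le ⟨Ds, hdom, rfl⟩
    have hW : ∑ p, f p = ∑ x, (f (x, v) + f (x, v + 1)) := by
      rw [Fintype.sum_prod_type]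
      exact Finset.sum_congr rfl fun x _ => sum_fin2 v _
    have hlow : ∀ x, (if x ∈ Ds then 2 else 1) ≤ f (x, v) + f (x, v + 1) := by
      intro x
      split_ifs with h
      · exact (hmem x).mp h
      · rcases Nat.eq_zero_or_pos (f (x, v + 1)) with h0 | h0
        · have := key1 x h0; omega
        · omega
    calc Fintype.card α + dominationNumber G ≤ Fintype.card α + Ds.card := by omega
      _ = ∑ x, (if x ∈ Ds then 2 else 1) := (sum_two_one Ds).symm
      _ ≤ ∑ x, (f (x, v) + f (x, v + 1)) := Finset.sum_le_sum fun x _ => hlow x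
      _ = ∑ p, f p := hW.symm
  exact le_antisymm hub hlb
end

section
/- Let G and H be graphs and let v ∈ V(H). If n(H) ≥ 3, then γ_I(G∘_v H) ≥ 2·n(G), and equality holds if and only if γ_I(H) = 2. -/
open Finset

open scoped Classical

namespace StmtAux

variable {α β : Type*} [Fintype α] [Fintype β]

/-- Embedding of a copy of H into the rooted product. -/
def emb (x : α) : β ↪ α × β :=
  ⟨fun w => (x, w), fun a b h => by simpa using h⟩

lemma italian_set_nonempty (G : SimpleGraph α) :
    {n | ∃ f : α → ℕ, IsIDF G f ∧ ∑ u, f u = n}.Nonempty :=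
  ⟨_, fun _ => 2, ⟨fun _ => le_rfl, fun u h => by simp at h⟩, rfl⟩

lemma exists_min (G : SimpleGraph α) :
    ∃ f : α → ℕ, IsIDF G f ∧ ∑ u, f u = italianNumber G :=
  Nat.sInf_mem (italian_set_nonempty G)

lemma two_le_italian (H : SimpleGraph β) (hβ : 2 ≤ Fintype.card β) :
    2 ≤ italianNumber H := by
  apply le_csInf (italian_set_nonempty H)
  rintro n ⟨f, ⟨hf2, hf0⟩, rfl⟩
  by_contra h
  push_neg at h
  obtain ⟨y, hy⟩ : ∃ y, f y = 0 := by
    by_contra hz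
    push_neg at hz
    have : Fintype.card β ≤ ∑ u, f u := by
      calc Fintype.card β = ∑ _u : β, 1 := by simp
        _ ≤ ∑ u, f u := Finset.sum_le_sum fun i _ => Nat.one_le_iff_ne_zero.2 (hz i)
    omega
  have h1 := hf0 y hy
  have h2 : ∑ w ∈ Finset.univ.filter (fun w => H.Adj y w), f w ≤ ∑ u, f u :=
    Finset.sum_le_sum_of_subset (Finset.filter_subset _ _)
  omega

variable (G : SimpleGraph α) (H : SimpleGraph β) (v : β)

lemma map_subset_nbr (x : α) (y : β) :
    (Finset.univ.filter (fun w => H.Adj y w)).map (emb x) ⊆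
      Finset.univ.filter (fun p => (rootedProd G H v).Adj (x, y) p) := by
  intro p hp
  simp only [Finset.mem_map, Finset.mem_filter, Finset.mem_univ, true_and] at hp ⊢
  obtain ⟨w, hw, rfl⟩ := hp
  exact Or.inl ⟨rfl, hw⟩

lemma nbr_eq_map (x : α) {y : β} (hy : y ≠ v) :
    Finset.univ.filter (fun p => (rootedProd G H v).Adj (x, y) p) =
      (Finset.univ.filter (fun w => H.Adj y w)).map (emb x) := by
  refine Finset.Subset.antisymm ?_ (map_subset_nbr G H v x y)
  rintro ⟨a, b⟩ hp
  simp only [Finset.mem_filter, Finset.mem_univ, true_and] at hp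
  simp only [rootedProd] at hp
  rcases hp with ⟨h1, h2⟩ | ⟨h1, _, _⟩
  · subst h1
    simp only [Finset.mem_map, Finset.mem_filter, Finset.mem_univ, true_and, emb]
    exact ⟨b, h2, rfl⟩
  · exact absurd h1 hy

lemma sum_map_emb (x : α) (s : Finset β) (f : α × β → ℕ) :
    ∑ p ∈ s.map (emb x), f p = ∑ w ∈ s, f (x, w) :=
  Finset.sum_map s (emb x) f

lemma total_eq_sum_copy (f : α × β → ℕ) :
    ∑ u, f u = ∑ x, copyWeight f x := by
  rw [Fintype.sum_prod_type]; rfl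

lemma copy_ge_two (hH : 3 ≤ Fintype.card β) {f : α × β → ℕ}
    (hf : IsIDF (rootedProd G H v) f) (x : α) : 2 ≤ copyWeight f x := by
  by_contra hlt
  push_neg at hlt
  have hcw : copyWeight f x ≤ 1 := by omega
  have hcard : 2 ≤ (Finset.univ.erase v).card := by
    rw [Finset.card_erase_of_mem (Finset.mem_univ v), Finset.card_univ]
    omega
  obtain ⟨y, hyv, hy0⟩ : ∃ y ∈ Finset.univ.erase v, f (x, y) = 0 := by
    by_contra hz
    push_neg at hz
    have : (Finset.univ.erase v).card ≤ copyWeight f x := by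
      calc (Finset.univ.erase v).card = ∑ _y ∈ Finset.univ.erase v, 1 := by simp
        _ ≤ ∑ y ∈ Finset.univ.erase v, f (x, y) :=
            Finset.sum_le_sum fun i hi => Nat.one_le_iff_ne_zero.2 (hz i hi)
        _ ≤ ∑ y, f (x, y) := Finset.sum_le_sum_of_subset (Finset.subset_univ _)
        _ = copyWeight f x := rfl
    omega
  have hyne : y ≠ v := Finset.ne_of_mem_erase hyv
  have h2 := hf.2 (x, y) hy0
  rw [nbr_eq_map G H v x hyne, sum_map_emb] at h2
  have : ∑ w ∈ Finset.univ.filter (fun w => H.Adj y w), f (x, w) ≤ copyWeight f x :=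
    Finset.sum_le_sum_of_subset (Finset.subset_univ _)
  omega

lemma lower_bound (hH : 3 ≤ Fintype.card β) :
    2 * Fintype.card α ≤ italianNumber (rootedProd G H v) := by
  apply le_csInf (italian_set_nonempty _)
  rintro n ⟨f, hf, rfl⟩
  calc 2 * Fintype.card α = ∑ _x : α, 2 := by simp [mul_comm]
    _ ≤ ∑ x, copyWeight f x := Finset.sum_le_sum fun x _ => copy_ge_two G H v hH hf x
    _ = ∑ u, f u := (total_eq_sum_copy f).symm

lemma upper_bound (hI : italianNumber H = 2) :
    italianNumber (rootedProd G H v) ≤ 2 * Fintype.card α := by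
  obtain ⟨g, ⟨hg2, hg0⟩, hgw⟩ := exists_min H
  rw [hI] at hgw
  have hidf : IsIDF (rootedProd G H v) (fun p => g p.2) := by
    refine ⟨fun u => hg2 u.2, ?_⟩
    rintro ⟨x, y⟩ h0
    have h2 := hg0 y h0
    calc (2 : ℕ) ≤ ∑ w ∈ Finset.univ.filter (fun w => H.Adj y w), g w := h2
      _ = ∑ p ∈ (Finset.univ.filter (fun w => H.Adj y w)).map (emb x),
            (fun p : α × β => g p.2) p := by rw [sum_map_emb]
      _ ≤ _ := Finset.sum_le_sum_of_subset (map_subset_nbr G H v x y)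
  apply Nat.sInf_le
  refine ⟨fun p => g p.2, hidf, ?_⟩
  rw [Fintype.sum_prod_type]
  simp [hgw, mul_comm]

lemma italian_H_eq_two (hH : 3 ≤ Fintype.card β) [Nonempty α]
    (hEq : italianNumber (rootedProd G H v) = 2 * Fintype.card α) :
    italianNumber H = 2 := by
  obtain ⟨f, hf, hw⟩ := exists_min (rootedProd G H v)
  rw [hEq] at hw
  have hcopy : ∀ x, copyWeight f x = 2 := by
    intro x
    by_contra hx
    have h3 : 3 ≤ copyWeight f x := by
      have := copy_ge_two G H v hH hf x; omega
    have hlt : ∑ _x : α, 2 < ∑ x, copyWeight f x :=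
      Finset.sum_lt_sum (fun i _ => copy_ge_two G H v hH hf i)
        ⟨x, Finset.mem_univ x, by omega⟩
    rw [← total_eq_sum_copy, hw] at hlt
    simp [mul_comm] at hlt
  have hlo : 2 ≤ italianNumber H := two_le_italian H (by omega)
  -- find a copy whose restriction is an IDF on H
  have key : ∃ x : α, IsIDF H (fun y => f (x, y)) := by
    by_cases hc : ∃ x, f (x, v) ≠ 0
    · obtain ⟨x, hx⟩ := hc
      refine ⟨x, fun y => hf.1 (x, y), ?_⟩
      intro y hy0
      have hyv : y ≠ v := fun h => hx (h ▸ hy0)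
      have h2 := hf.2 (x, y) hy0
      rwa [nbr_eq_map G H v x hyv, sum_map_emb] at h2
    · push_neg at hc
      obtain ⟨x⟩ := ‹Nonempty α›
      refine ⟨x, fun y => hf.1 (x, y), ?_⟩
      intro y hy0
      by_cases hyv : y = v
      · rw [hyv]
        have h2 := hf.2 (x, v) (hc x)
        have hle : ∑ p ∈ Finset.univ.filter
              (fun p => (rootedProd G H v).Adj (x, v) p), f p ≤
            ∑ p ∈ (Finset.univ.filter (fun w => H.Adj v w)).map (emb x), f p := by
          apply Finset.sum_le_sum_of_ne_zero
          rintro ⟨a, b⟩ hp hne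
          simp only [Finset.mem_filter, Finset.mem_univ, true_and, rootedProd] at hp
          rcases hp with ⟨h1, hadj⟩ | ⟨hbv, -⟩
          · subst h1
            simp only [Finset.mem_map, Finset.mem_filter, Finset.mem_univ, true_and, emb]
            exact ⟨b, hadj, rfl⟩
          · exact absurd (hbv ▸ hc a) hne
        rw [sum_map_emb] at hle
        show 2 ≤ ∑ w ∈ Finset.univ.filter (fun w => H.Adj v w), f (x, w)
        omega
      · have h2 := hf.2 (x, y) hy0
        rwa [nbr_eq_map G H v x hyv, sum_map_emb] at h2
  obtain ⟨x, hidf⟩ := key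
  have hhi : italianNumber H ≤ 2 := Nat.sInf_le ⟨fun y => f (x, y), hidf, hcopy x⟩
  omega

end StmtAux

/-- Corollary: if n(H) ≥ 3, then γ_I(G∘_v H) ≥ 2n(G), with equality
iff γ_I(H) = 2. -/
theorem stmt8 {α β : Type*} [Fintype α] [Nonempty α] [Fintype β]
    (G : SimpleGraph α) (H : SimpleGraph β) (v : β) (hH : 3 ≤ Fintype.card β) :
    2 * Fintype.card α ≤ italianNumber (rootedProd G H v) ∧
      (italianNumber (rootedProd G H v) = 2 * Fintype.card α ↔ italianNumber H = 2) := by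
  refine ⟨StmtAux.lower_bound G H v hH, ?_, ?_⟩
  · exact StmtAux.italian_H_eq_two G H v hH
  · intro hI
    exact le_antisymm (StmtAux.upper_bound G H v hI) (StmtAux.lower_bound G H v hH)
end
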